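/- Let P ⊆ ℤⁿ be an f-antichain and let i ∈ ℤ with −a ≤ i ≤ a. Then P contains at most one point x with x₁ = i. -/

import Mathlib

namespace EvoMO

/-- Search points: integer vectors of dimension `n`. -/
abbrev Pt (n : ℕ) := Fin n → ℤ

/-- The bi-objective benchmark function
`f(x) = (|x₁ − a| + Σ_{i≥2} |x_i|, |x₁ + a| + Σ_{i≥2} |x_i|)`. -/
def benchf (n a : ℕ) [NeZero n] (x : Pt n) : ℤ × ℤ :=
  (|x 0 - (a : ℤ)| + ∑ i ∈ Finset.univ.erase (0 : Fin n), |x i|,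
   |x 0 + (a : ℤ)| + ∑ i ∈ Finset.univ.erase (0 : Fin n), |x i|)

/-- Weak dominance (for minimization): `u ⪯ v`. -/
def dominates (u v : ℤ × ℤ) : Prop := u.1 ≤ v.1 ∧ u.2 ≤ v.2

/-- Strict dominance: `u ≺ v`. -/
def sdominates (u v : ℤ × ℤ) : Prop := dominates u v ∧ u ≠ v

/-- L1-norm of an integer vector. -/
def l1 {n : ℕ} (x : Pt n) : ℤ := ∑ i, |x i|

/-- The Pareto front `F*` of the benchmark function. -/
def paretoFront (n a : ℕ) [NeZero n] : Set (ℤ × ℤ) :=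
  {p | ∃ y : Pt n, benchf n a y = p ∧ ¬ ∃ x : Pt n, sdominates (benchf n a x) (benchf n a y)}

instance (u v : ℤ × ℤ) : Decidable (dominates u v) := by
  unfold dominates; infer_instance

instance (u v : ℤ × ℤ) : Decidable (sdominates u v) := by
  unfold sdominates; infer_instance

end EvoMO

namespace EvoMO

/-- A set of search points is an `f`-antichain if no point in it weakly dominates
another (distinct) point in it. In particular, every population maintained by the
SEMO/GSEMO is an `f`-antichain. -/
def IsFAntichain (n a : ℕ) [NeZero n] (P : Set (Pt n)) : Prop :=
  ∀ x ∈ P, ∀ y ∈ P, x ≠ y → ¬ dominates (benchf n a x) (benchf n a y)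

end EvoMO

open EvoMO in
/-- **Lemma 3.** For every `i ∈ [−a, a]`, an `f`-antichain `P ⊆ ℤⁿ` contains at most
one point `x` with `x₁ = i`. -/
theorem antichain_at_most_one_per_value (n a : ℕ) [NeZero n] (hn : 2 ≤ n)
    (P : Set (Pt n)) (hP : IsFAntichain n a P) (i : ℤ) (hi : -(a : ℤ) ≤ i ∧ i ≤ a) :
    ∀ x ∈ P, ∀ y ∈ P, x 0 = i → y 0 = i → x = y := by
  intro x hx y hy hxi hyi
  by_contra hne
  set Sx := ∑ j ∈ Finset.univ.erase (0 : Fin n), |x j| with hSx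
  set Sy := ∑ j ∈ Finset.univ.erase (0 : Fin n), |y j| with hSy
  rcases le_total Sx Sy with h | h
  · exact hP x hx y hy hne
      ⟨by dsimp [benchf]; rw [hxi, hyi]; exact add_le_add_right h _,
       by dsimp [benchf]; rw [hxi, hyi]; exact add_le_add_right h _⟩
  · exact hP y hy x hx (Ne.symm hne)
      ⟨by dsimp [benchf]; rw [hxi, hyi]; exact add_le_add_right h _,
       by dsimp [benchf]; rw [hxi, hyi]; exact add_le_add_right h _⟩
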